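/- Let a ∈ ℝ and let J, y : ℝ → ℝ³ be differentiable curves with y₁(u), y₂(u), y₃(u) ≠ 0 for all u, satisfying the rescaled Euler–Poisson equations dJ/du = (a²/2) (y × y⁻¹) and dy/du = −(1/2) (J × y⁻¹), where y⁻¹ = (1/y₁, 1/y₂, 1/y₃) and × is the cross product in ℝ³. Define the symmetric hollow matrix 𝒥(u) with rows [[0, J₃, J₂], [J₃, 0, J₁], [J₂, J₁, 0]], the antisymmetric matrix 𝒳(u) with rows [[0, y₃, −y₂], [−y₃, 0, y₁], [y₂, −y₁, 0]], and the symmetric hollow matrix M(u) with rows [[0, a/(2y₃), a/(2y₂)], [a/(2y₃), 0, a/(2y₁)], [a/(2y₂), a/(2y₁), 0]]. Then for every λ ∈ ℝ, the matrix L(λ,u) = λ I + 𝒥(u) + a 𝒳(u) satisfies the Lax equation dL/du = L M − M L. -/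

import Mathlib

open Matrix

attribute [local instance] Matrix.frobeniusNormedAddCommGroup Matrix.frobeniusNormedSpace

/-- The cross product in `ℝ³`. -/
def cross (u v : Fin 3 → ℝ) : Fin 3 → ℝ :=
  ![u 1 * v 2 - u 2 * v 1, u 2 * v 0 - u 0 * v 2, u 0 * v 1 - u 1 * v 0]

/-- The symmetric hollow matrix of angular momentum `𝒥_{ij} = |ε_{ijk}| J_k`. -/
def Jmat (J : Fin 3 → ℝ) : Matrix (Fin 3) (Fin 3) ℝ :=
  !![0, J 2, J 1; J 2, 0, J 0; J 1, J 0, 0]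

/-- The antisymmetric matrix of coordinates `𝒳_{ij} = ε_{ijk} y_k`. -/
def Xmat (y : Fin 3 → ℝ) : Matrix (Fin 3) (Fin 3) ℝ :=
  !![0, y 2, -y 1; -y 2, 0, y 0; y 1, -y 0, 0]

/-- The Lax matrix `L(λ) = λ I + 𝒥 + a 𝒳` of the deformed spherical top. -/
def LaxL (a lam : ℝ) (J y : Fin 3 → ℝ) : Matrix (Fin 3) (Fin 3) ℝ :=
  lam • (1 : Matrix (Fin 3) (Fin 3) ℝ) + Jmat J + a • Xmat y

/-- The second Lax matrix `M` of the deformed spherical top, the symmetric hollow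
matrix with entries `M_{ij} = |ε_{ijk}| a/(2 y_k)`. -/
noncomputable def LaxM (a : ℝ) (y : Fin 3 → ℝ) : Matrix (Fin 3) (Fin 3) ℝ :=
  !![0, a / (2 * y 2), a / (2 * y 1);
     a / (2 * y 2), 0, a / (2 * y 0);
     a / (2 * y 1), a / (2 * y 0), 0]

def JmatL : (Fin 3 → ℝ) →ₗ[ℝ] Matrix (Fin 3) (Fin 3) ℝ where
  toFun := Jmat
  map_add' x y := by ext i j; fin_cases i <;> fin_cases j <;> simp [Jmat]
  map_smul' c x := by ext i j; fin_cases i <;> fin_cases j <;> simp [Jmat]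

def XmatL : (Fin 3 → ℝ) →ₗ[ℝ] Matrix (Fin 3) (Fin 3) ℝ where
  toFun := Xmat
  map_add' x y := by ext i j; fin_cases i <;> fin_cases j <;> simp [Xmat] <;> ring
  map_smul' c x := by ext i j; fin_cases i <;> fin_cases j <;> simp [Xmat]

set_option maxHeartbeats 2000000 in
/-- The rescaled Euler–Poisson equations `dJ/du = (a²/2)(y × y⁻¹)`,
`dy/du = −(1/2)(J × y⁻¹)` of the deformed spherical top imply the Lax equation
`dL/du = [L, M] = LM − ML` for every value of the spectral parameter `λ`. -/
theorem deformed_top_lax_representation (a : ℝ)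
    (J y : ℝ → Fin 3 → ℝ)
    (hy0 : ∀ u, y u 0 ≠ 0 ∧ y u 1 ≠ 0 ∧ y u 2 ≠ 0)
    (hJ : ∀ u, HasDerivAt J ((a ^ 2 / 2) • cross (y u) (fun i => (y u i)⁻¹)) u)
    (hy : ∀ u, HasDerivAt y (-((1 : ℝ) / 2) • cross (J u) (fun i => (y u i)⁻¹)) u) :
    ∀ lam : ℝ, ∀ u : ℝ,
      HasDerivAt (fun s => LaxL a lam (J s) (y s))
        (LaxL a lam (J u) (y u) * LaxM a (y u) -
          LaxM a (y u) * LaxL a lam (J u) (y u)) u := by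
  intro lam u
  obtain ⟨h0, h1, h2⟩ := hy0 u
  have hJd : HasDerivAt (fun s => Jmat (J s))
      (JmatL ((a ^ 2 / 2) • cross (y u) (fun i => (y u i)⁻¹))) u :=
    (JmatL.toContinuousLinearMap.hasFDerivAt).comp_hasDerivAt u (hJ u)
  have hXd : HasDerivAt (fun s => Xmat (y s))
      (XmatL (-((1 : ℝ) / 2) • cross (J u) (fun i => (y u i)⁻¹))) u :=
    (XmatL.toContinuousLinearMap.hasFDerivAt).comp_hasDerivAt u (hy u)
  have h := ((hasDerivAt_const u (lam • (1 : Matrix (Fin 3) (Fin 3) ℝ))).add hJd).add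
    (hXd.const_smul a)
  have heq : (LaxL a lam (J u) (y u) * LaxM a (y u) -
      LaxM a (y u) * LaxL a lam (J u) (y u)) =
      0 + JmatL ((a ^ 2 / 2) • cross (y u) (fun i => (y u i)⁻¹)) +
        a • XmatL (-((1 : ℝ) / 2) • cross (J u) (fun i => (y u i)⁻¹)) := by
    ext i j
    fin_cases i <;> fin_cases j <;>
      · simp only [LaxL, LaxM, Jmat, Xmat, JmatL, XmatL, cross, Matrix.sub_apply,
          Matrix.add_apply, Matrix.mul_apply, Matrix.smul_apply, Matrix.one_fin_three,
          Fin.sum_univ_three, Matrix.cons_val', Matrix.cons_val_zero, Matrix.cons_val_one,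
          Matrix.head_cons, Matrix.head_fin_const, Matrix.empty_val', Matrix.cons_val_fin_one,
          Matrix.of_apply, Matrix.zero_apply, LinearMap.coe_mk, AddHom.coe_mk,
          Pi.smul_apply, smul_eq_mul, Matrix.cons_val_two, Matrix.tail_cons,
          Fin.zero_eta, Fin.mk_one, Fin.isValue, Fin.reduceFinMk]
        field_simp
        ring
  rw [heq]
  exact h
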